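/- Let w₋₂, w₋₁, w₀, w₁ be strictly positive real numbers and set x = w₋₁/w₀, y = w₁/w₀, z = w₋₂/w₀. Let p be the complex cubic polynomial p(X) = w₋₂·X³ + w₋₁·X² + w₀·X + w₁, and assume p has no root of modulus exactly 1. Write C₂ = 1 − x − y + z, C₃ = z − z² − x·y + y², C₄ = |y − x| − 2z. If either (C₃ > 0 and C₂ > 0) or (C₃ < 0 and C₂ > 0 and C₄ > 0), then exactly one root of p (counted with multiplicity) lies in the open unit disk {ζ ∈ ℂ : |ζ| < 1}. -/

import Mathlib

open Polynomial

private lemma aux_pos_val (wm2 wm1 w0 w1 t : ℝ) (hm2 : 0 < wm2) (hm1 : 0 < wm1)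
    (h0 : 0 < w0) (h1 : 0 < w1) (ht : 0 ≤ t) :
    wm2*t^3 + wm1*t^2 + w0*t + w1 ≠ 0 := by
  have := mul_nonneg hm2.le (pow_nonneg ht 3)
  have := mul_nonneg hm1.le (pow_nonneg ht 2)
  have := mul_nonneg h0.le ht
  positivity

private lemma aux_prod_pos (wm2 r P : ℝ) (hm2 : 0 < wm2) (hr : -1 < r)
    (hlt : wm2*((-1) - r)*P < 0) : 0 < P := by
  by_contra hP; push_neg at hP
  nlinarith [mul_nonneg (mul_nonneg hm2.le (show (0:ℝ) ≤ 1 + r by linarith))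
    (neg_nonneg.mpr hP)]

private lemma aux_one (u v : ℝ) (h : 0 < (1+u)*(1+v)) (hu : -1 < u) : -1 < v := by
  by_contra hv; push_neg at hv
  nlinarith [mul_nonneg (show (0:ℝ) ≤ 1+u by linarith) (show (0:ℝ) ≤ -(1+v) by linarith)]

private lemma aux_abs (w : ℂ) (hw : ‖w‖ < 1) :
    w.re*w.re + w.im*w.im < 1 := by
  have hsq := Complex.sq_norm w
  have hns := Complex.normSq_apply w
  nlinarith [norm_nonneg w]

private lemma aux_real_bounds (r a s3 : ℝ) (hrm1 : -1 < r) (hr0 : r < 0)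
    (ha1 : -1 < a) (ha0 : a < 0) (hs31 : -1 < s3) (hs30 : s3 < 0) :
    0 < 1 - a*s3 ∧ 0 < 1 + r*(-(a+s3)) + r^2*(a*s3) ∧
      r*(1 - a*s3) + (a+s3) < 2 ∧ -2 < r*(1 - a*s3) + (a+s3) := by
  have hma : (0:ℝ) < -a := by linarith
  have h1pa : (0:ℝ) < 1 + a := by linarith
  have h1ps3 : (0:ℝ) < 1 + s3 := by linarith
  have has3 : (0:ℝ) < 1 - a*s3 := by nlinarith [mul_pos hma h1ps3]
  refine ⟨has3, ?_, ?_, ?_⟩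
  · have hra : (0:ℝ) < 1 - r*a := by
      nlinarith [mul_pos (show (0:ℝ) < -r by linarith) h1pa]
    have hrs3 : (0:ℝ) < 1 - r*s3 := by
      nlinarith [mul_pos (show (0:ℝ) < -r by linarith) h1ps3]
    nlinarith [mul_pos hra hrs3]
  · nlinarith [mul_pos (show (0:ℝ) < -r by linarith) has3]
  · nlinarith [mul_pos (show (0:ℝ) < 1 + r by linarith) has3, mul_pos h1pa h1ps3]

private lemma aux_cx_bounds (r a b : ℝ) (hrm1 : -1 < r) (hr0 : r < 0)
    (hm1lt : a*a + b*b < 1) :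
    0 < 1 - (a*a+b*b) ∧ 0 < 1 + r*(-(2*a)) + r^2*(a*a+b*b) ∧
      r*(1 - (a*a+b*b)) + 2*a < 2 ∧ -2 < r*(1 - (a*a+b*b)) + 2*a := by
  have HG : (0:ℝ) < 1 - (a*a+b*b) := by linarith
  have ha1 : -1 < a := by nlinarith [mul_self_nonneg b]
  have ha2 : a < 1 := by nlinarith [mul_self_nonneg b]
  refine ⟨HG, ?_, ?_, ?_⟩
  · have hra : (0:ℝ) < 1 - r*a := by
      nlinarith [mul_pos (show (0:ℝ) < -r by linarith) (show (0:ℝ) < 1 + a by linarith)]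
    nlinarith [mul_pos hra hra, mul_self_nonneg (r*b)]
  · nlinarith [mul_pos (show (0:ℝ) < -r by linarith) HG]
  · nlinarith [mul_pos (show (0:ℝ) < 1 + r by linarith) HG, sq_nonneg (1+a),
      mul_self_nonneg b]

set_option maxHeartbeats 1000000 in
/-- **The `|γ| = 0` row of Table S1.** For positive hoppings `w₋₂, w₋₁, w₀, w₁`
with `x = w₋₁/w₀`, `y = w₁/w₀`, `z = w₋₂/w₀`, if the cubic
`p(X) = w₋₂ X³ + w₋₁ X² + w₀ X + w₁` has no root on the unit circle and either
(`C₃ > 0` and `C₂ > 0`) or (`C₃ < 0`, `C₂ > 0` and `C₄ > 0`), where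
`C₂ = 1 - x - y + z`, `C₃ = z - z² - x y + y²`, `C₄ = |y - x| - 2z`, then exactly
one root of `p` (with multiplicity) lies in the open unit disk. -/
theorem winding_zero_root_count
    (wm2 wm1 w0 w1 : ℝ)
    (hm2 : 0 < wm2) (hm1 : 0 < wm1) (h0 : 0 < w0) (h1 : 0 < w1)
    (x y z : ℝ) (hx : x = wm1 / w0) (hy : y = w1 / w0) (hz : z = wm2 / w0)
    (p : Polynomial ℂ)
    (hp : p = C (wm2 : ℂ) * X ^ 3 + C (wm1 : ℂ) * X ^ 2 + C (w0 : ℂ) * X + C (w1 : ℂ))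
    (hcirc : ∀ ζ : ℂ, p.IsRoot ζ → ‖ζ‖ ≠ 1)
    (hcond : (z - z ^ 2 - x * y + y ^ 2 > 0 ∧ 1 - x - y + z > 0) ∨
      (z - z ^ 2 - x * y + y ^ 2 < 0 ∧ 1 - x - y + z > 0 ∧ |y - x| - 2 * z > 0)) :
    Multiset.card (p.roots.filter fun ζ => ‖ζ‖ < 1) = 1 := by
  subst hx hy hz
  have hw0ne : w0 ≠ 0 := ne_of_gt h0
  have hm2' : wm2 ≠ 0 := ne_of_gt hm2
  -- C2 in w-form
  have hC2w : 0 < w0 + wm2 - wm1 - w1 := by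
    have h := hcond.elim (fun h => h.2) (fun h => h.2.1)
    have e : w0 * (1 - wm1 / w0 - w1 / w0 + wm2 / w0) = w0 + wm2 - wm1 - w1 := by
      field_simp; ring
    linarith [mul_pos h0 h]
  -- real root r ∈ (-1,0)
  obtain ⟨r, hr, hfr⟩ : ∃ r ∈ Set.Ioo (-1:ℝ) 0, wm2*r^3 + wm1*r^2 + w0*r + w1 = 0 := by
    have hcont : ContinuousOn (fun t : ℝ => wm2*t^3 + wm1*t^2 + w0*t + w1)
        (Set.Icc (-1) 0) := by fun_prop
    have hsub := intermediate_value_Ioo (by norm_num : (-1:ℝ) ≤ 0) hcont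
    have h0mem : (0:ℝ) ∈ Set.Ioo (wm2*(-1:ℝ)^3 + wm1*(-1:ℝ)^2 + w0*(-1:ℝ) + w1)
        (wm2*(0:ℝ)^3 + wm1*(0:ℝ)^2 + w0*(0:ℝ) + w1) := by
      constructor
      · norm_num; linarith
      · norm_num; linarith
    obtain ⟨r, hr, hfr⟩ := hsub h0mem
    exact ⟨r, hr, hfr⟩
  obtain ⟨hrm1, hr0⟩ := hr
  obtain ⟨B, hBdef⟩ : ∃ t : ℝ, t = wm1 / wm2 + r := ⟨_, rfl⟩
  obtain ⟨G, hGdef⟩ : ∃ t : ℝ, t = w0 / wm2 + r * B := ⟨_, rfl⟩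
  have hw1' : wm1 = wm2 * (B - r) := by rw [hBdef]; field_simp; ring
  have hw0' : w0 = wm2 * (G - r * B) := by rw [hGdef]; field_simp; ring
  have hww1 : w1 = -(wm2 * (r * G)) := by
    rw [hGdef, hBdef]
    field_simp
    linear_combination hfr
  -- the key real factorization identity
  have hid : ∀ t : ℝ, wm2*t^3 + wm1*t^2 + w0*t + w1 = wm2*(t - r)*(t^2 + B*t + G) := by
    intro t; rw [hw1', hw0', hww1]; ring
  -- quadratic root
  obtain ⟨ρ2, hρ2⟩ : ∃ ζ : ℂ, ζ^2 + (B:ℂ)*ζ + (G:ℂ) = 0 := by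
    have hq : ((X:ℂ[X])^2 + C (B:ℂ) * X + C (G:ℂ)) = C 1 * X^2 + C (B:ℂ) * X + C (G:ℂ) := by
      simp
    have hdeg : 0 < degree ((X:ℂ[X])^2 + C (B:ℂ) * X + C (G:ℂ)) := by
      rw [hq, degree_quadratic one_ne_zero]; norm_num
    obtain ⟨ζ, hζ⟩ := Complex.exists_root hdeg
    refine ⟨ζ, ?_⟩
    simpa [IsRoot] using hζ
  obtain ⟨ρ3, hρ3def⟩ : ∃ w : ℂ, w = -(B:ℂ) - ρ2 := ⟨_, rfl⟩
  have hwm2c : ((wm2:ℝ):ℂ) ≠ 0 := by exact_mod_cast hm2'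
  -- factorization of p
  have hfac : p = C ((wm2:ℝ):ℂ) * ((X - C ((r:ℝ):ℂ)) * ((X - C ρ2) * (X - C ρ3))) := by
    apply Polynomial.funext
    intro ζ
    simp only [hp, eval_add, eval_mul, eval_sub, eval_pow, eval_C, eval_X]
    have c1 : ((wm1:ℝ):ℂ) = (wm2:ℂ) * ((B:ℂ) - (r:ℂ)) := by
      exact_mod_cast congrArg Complex.ofReal hw1'
    have c0 : ((w0:ℝ):ℂ) = (wm2:ℂ) * ((G:ℂ) - (r:ℂ) * (B:ℂ)) := by
      exact_mod_cast congrArg Complex.ofReal hw0'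
    have cw1 : ((w1:ℝ):ℂ) = -((wm2:ℂ) * ((r:ℂ) * (G:ℂ))) := by
      exact_mod_cast congrArg Complex.ofReal hww1
    have cB : (B:ℂ) = -ρ2 - ρ3 := by rw [hρ3def]; ring
    have cG : (G:ℂ) = ρ2 * ρ3 := by rw [hρ3def]; linear_combination hρ2
    rw [c1, c0, cw1, cB, cG]; ring
  have hroots : p.roots = {((r:ℝ):ℂ)} + ({ρ2} + {ρ3}) := by
    rw [hfac, roots_C_mul _ hwm2c,
      roots_mul (mul_ne_zero (X_sub_C_ne_zero _)
        (mul_ne_zero (X_sub_C_ne_zero _) (X_sub_C_ne_zero _))),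
      roots_mul (mul_ne_zero (X_sub_C_ne_zero _) (X_sub_C_ne_zero _)),
      roots_X_sub_C, roots_X_sub_C, roots_X_sub_C]
  -- roots ρ2, ρ3 are not in the open unit disk
  have hnotin : ¬ ‖ρ2‖ < 1 ∧ ¬ ‖ρ3‖ < 1 := by
    by_contra hcon
    simp only [not_and_or, not_not] at hcon
    have h' : ρ2*ρ2 + (B:ℂ)*ρ2 + (G:ℂ) = 0 := by linear_combination hρ2
    rw [Complex.ext_iff] at h'
    simp only [Complex.add_re, Complex.add_im, Complex.mul_re, Complex.mul_im,
      Complex.ofReal_re, Complex.ofReal_im, Complex.zero_re, Complex.zero_im,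
      zero_mul, mul_zero, sub_zero, add_zero, zero_add, zero_sub] at h'
    obtain ⟨hre, him⟩ := h'
    obtain ⟨a, hadef⟩ : ∃ t : ℝ, t = ρ2.re := ⟨_, rfl⟩
    obtain ⟨b, hbdef⟩ : ∃ t : ℝ, t = ρ2.im := ⟨_, rfl⟩
    rw [← hadef, ← hbdef] at hre him
    have h3re : ρ3.re = -B - a := by
      rw [hρ3def]
      simp [Complex.sub_re, Complex.neg_re, Complex.ofReal_re, ← hadef]
    have h3im : ρ3.im = -b := by
      rw [hρ3def]
      simp [Complex.sub_im, Complex.neg_im, Complex.ofReal_im, ← hbdef]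
    have key : w0*wm2 - wm2^2 - wm1*w1 + w1^2 = -(wm2^2*((1-G)*(1+r*B+r^2*G))) := by
      rw [hw1', hw0', hww1]; ring
    have key2 : w1 - wm1 = wm2*(r*(1-G) - B) := by rw [hw1', hww1]; ring
    obtain ⟨HG, HQ, Hub, Hlb⟩ :
        (0 < 1 - G) ∧ (0 < 1 + r*B + r^2*G) ∧ (r*(1-G) - B < 2) ∧ (-2 < r*(1-G) - B) := by
      by_cases hb : b = 0
      · -- both quadratic roots are real
        rw [hb] at hre
        have hre2 : a^2 + B*a + G = 0 := by linear_combination hre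
        obtain ⟨s3, hs3def⟩ : ∃ t : ℝ, t = -B - a := ⟨_, rfl⟩
        have hBs : B = -(a+s3) := by rw [hs3def]; ring
        have hGs : G = a*s3 := by rw [hs3def]; linear_combination hre2
        have hs3root : s3^2 + B*s3 + G = 0 := by rw [hs3def]; linear_combination hre2
        have hfa : wm2*a^3 + wm1*a^2 + w0*a + w1 = 0 := by
          have h2 := hid a
          rw [show a^2 + B*a + G = 0 from hre2, mul_zero] at h2
          exact h2
        have hfs3 : wm2*s3^3 + wm1*s3^2 + w0*s3 + w1 = 0 := by
          have h2 := hid s3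
          rw [hs3root, mul_zero] at h2
          exact h2
        have hs2neg : a < 0 := by
          by_contra hpos; push_neg at hpos
          exact aux_pos_val wm2 wm1 w0 w1 a hm2 hm1 h0 h1 hpos hfa
        have hs3neg : s3 < 0 := by
          by_contra hpos; push_neg at hpos
          exact aux_pos_val wm2 wm1 w0 w1 s3 hm2 hm1 h0 h1 hpos hfs3
        have hρ2real : ρ2 = ((a:ℝ):ℂ) := by
          apply Complex.ext
          · rw [Complex.ofReal_re, hadef]
          · rw [Complex.ofReal_im, ← hbdef]; exact hb
        have hρ3real : ρ3 = ((s3:ℝ):ℂ) := by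
          apply Complex.ext
          · rw [Complex.ofReal_re, h3re, hs3def]
          · rw [Complex.ofReal_im, h3im, hb]; ring
        have hfm1 : -wm2 + wm1 - w0 + w1 = wm2*((-1) - r)*(1 - B + G) := by
          linear_combination hid (-1)
        have hfm1' : 1 - B + G = (1+a)*(1+s3) := by rw [hBs, hGs]; ring
        have hlt : wm2*((-1) - r)*((1+a)*(1+s3)) < 0 := by
          rw [← hfm1', ← hfm1]; linarith
        have hQpos : 0 < (1+a)*(1+s3) := aux_prod_pos wm2 r _ hm2 hrm1 hlt
        have hbnd : -1 < a ∧ -1 < s3 := by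
          rcases hcon with h | h
          · rw [hρ2real, Complex.norm_real, Real.norm_eq_abs, abs_lt] at h
            exact ⟨h.1, aux_one a s3 hQpos h.1⟩
          · rw [hρ3real, Complex.norm_real, Real.norm_eq_abs, abs_lt] at h
            have hQpos' : 0 < (1+s3)*(1+a) := by linarith [hQpos]; 
            exact ⟨aux_one s3 a (by linarith [hQpos']) h.1, h.1⟩
        obtain ⟨ha1, hs31⟩ := hbnd
        obtain ⟨Q1, Q2, Q3, Q4⟩ := aux_real_bounds r a s3 hrm1 hr0 ha1 hs2neg hs31 hs3neg
        refine ⟨?_, ?_, ?_, ?_⟩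
        · rw [hGs]; linarith
        · rw [hBs, hGs]; linarith
        · rw [hBs, hGs]; linarith
        · rw [hBs, hGs]; linarith
      · -- complex conjugate pair
        have hBa : B = -(2*a) := by
          have h2 : b*(2*a + B) = 0 := by linear_combination him
          rcases mul_eq_zero.mp h2 with h | h
          · exact absurd h hb
          · linarith
        have hGa : G = a*a + b*b := by linear_combination hre - a*hBa
        have hm1lt : a*a + b*b < 1 := by
          rcases hcon with h | h
          · have h3 := aux_abs ρ2 h
            rw [← hadef, ← hbdef] at h3
            exact h3
          · have h3 := aux_abs ρ3 h
            rw [h3re, h3im, hBa] at h3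
            nlinarith [h3]
        obtain ⟨Q1, Q2, Q3, Q4⟩ := aux_cx_bounds r a b hrm1 hr0 hm1lt
        refine ⟨?_, ?_, ?_, ?_⟩
        · rw [hGa]; linarith
        · rw [hBa, hGa]; linarith
        · rw [hBa, hGa]; linarith
        · rw [hBa, hGa]; linarith
    rcases hcond with hc | hc
    · have e3 : w0^2 * (wm2/w0 - (wm2/w0)^2 - wm1/w0*(w1/w0) + (w1/w0)^2)
          = w0*wm2 - wm2^2 - wm1*w1 + w1^2 := by field_simp
      have hC3w : 0 < w0*wm2 - wm2^2 - wm1*w1 + w1^2 := by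
        have hpp := mul_pos (pow_pos h0 2) hc.1
        linarith [e3]
      rw [key] at hC3w
      linarith [mul_pos (pow_pos hm2 2) (mul_pos HG HQ)]
    · have h4 := hc.2.2
      have e4 : w0 * (|w1/w0 - wm1/w0| - 2*(wm2/w0)) = |w1 - wm1| - 2*wm2 := by
        rw [show w1/w0 - wm1/w0 = (w1 - wm1)/w0 by ring, abs_div, abs_of_pos h0]
        field_simp
      have hC4w : 2*wm2 < |w1 - wm1| := by
        have hpp := mul_pos h0 h4
        linarith [e4]
      have habs : |w1 - wm1| < 2*wm2 := by
        rw [abs_lt]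
        constructor
        · linarith [key2, mul_pos hm2 (show (0:ℝ) < 2 + (r*(1-G) - B) by linarith)]
        · linarith [key2, mul_pos hm2 (show (0:ℝ) < 2 - (r*(1-G) - B) by linarith)]
      linarith
  -- conclude
  have hrabs : ‖((r:ℝ):ℂ)‖ < 1 := by
    rw [Complex.norm_real, Real.norm_eq_abs, abs_lt]
    constructor <;> linarith
  rw [hroots, Multiset.filter_add, Multiset.filter_add, Multiset.filter_singleton,
    Multiset.filter_singleton, Multiset.filter_singleton,
    if_pos hrabs, if_neg hnotin.1, if_neg hnotin.2]
  simp
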